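/- Let n ≥ 2 and x_1, ..., x_n > 0. For each k with 1 ≤ k ≤ n define s_k = ((Σ_{j=1}^k x_j)^2 − Σ_{j=1}^k x_j^2)/(2 Σ_{j=1}^k x_j) + Σ_{j=k+1}^n x_j. Then s_1 > s_2 > ... > s_n, i.e., s_k > s_{k+1} for all 1 ≤ k ≤ n−1. -/

import Mathlib

open Finset

lemma sum_sq_le_sq_sum_aux (t : Finset ℕ) (f : ℕ → ℝ) (h : ∀ i ∈ t, 0 ≤ f i) :
    ∑ i ∈ t, f i ^ 2 ≤ (∑ i ∈ t, f i) ^ 2 := by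
  calc ∑ i ∈ t, f i ^ 2 ≤ ∑ i ∈ t, f i * (∑ j ∈ t, f j) := by
        apply Finset.sum_le_sum
        intro i hi
        have h1 := Finset.single_le_sum h hi
        have h2 := h i hi
        nlinarith
    _ = (∑ i ∈ t, f i) ^ 2 := by rw [← Finset.sum_mul]; ring

theorem sk_strict_decreasing
    (n : ℕ) (hn : 2 ≤ n) (x : ℕ → ℝ)
    (hx : ∀ j, 1 ≤ j → j ≤ n → 0 < x j)
    (s : ℕ → ℝ)
    (hs : ∀ k, s k =
      ((∑ j ∈ Finset.Icc 1 k, x j) ^ 2 - ∑ j ∈ Finset.Icc 1 k, (x j) ^ 2) /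
        (2 * ∑ j ∈ Finset.Icc 1 k, x j) +
      ∑ j ∈ Finset.Icc (k + 1) n, x j) :
    ∀ k, 1 ≤ k → k ≤ n - 1 → s (k + 1) < s k := by
  intro k hk1 hkn
  have hkn' : k + 1 ≤ n := by omega
  set S := ∑ j ∈ Finset.Icc 1 k, x j with hS
  set Q := ∑ j ∈ Finset.Icc 1 k, (x j) ^ 2 with hQ
  set a := x (k + 1) with ha
  set T := ∑ j ∈ Finset.Icc (k + 2) n, x j with hT
  have hapos : 0 < a := hx (k + 1) (by omega) hkn'
  have hSpos : 0 < S := by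
    apply Finset.sum_pos
    · intro j hj
      simp only [Finset.mem_Icc] at hj
      exact hx j hj.1 (by omega)
    · exact ⟨1, by simp [Finset.mem_Icc]; omega⟩
  have hQS : Q ≤ S ^ 2 := by
    apply sum_sq_le_sq_sum_aux
    intro i hi
    simp only [Finset.mem_Icc] at hi
    exact (hx i hi.1 (by omega)).le
  -- sums at k+1
  have hsum1 : ∑ j ∈ Finset.Icc 1 (k + 1), x j = S + a := by
    rw [hS, Finset.sum_Icc_succ_top (by omega : 1 ≤ k + 1)]
  have hsum2 : ∑ j ∈ Finset.Icc 1 (k + 1), (x j) ^ 2 = Q + a ^ 2 := by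
    rw [hQ, Finset.sum_Icc_succ_top (by omega : 1 ≤ k + 1)]
  have hsum3 : ∑ j ∈ Finset.Icc (k + 1) n, x j = a + T := by
    have hins : Finset.Icc (k + 1) n = insert (k + 1) (Finset.Icc (k + 2) n) := by
      ext j
      simp only [Finset.mem_Icc, Finset.mem_insert]
      omega
    rw [hins, Finset.sum_insert (by simp [Finset.mem_Icc])]
  rw [hs k, hs (k + 1), hsum1, hsum2, hsum3]
  have key : ((S + a) ^ 2 - (Q + a ^ 2)) / (2 * (S + a)) <
      ((S ^ 2 - Q) + a * (2 * S)) / (2 * S) := by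
    rw [div_lt_div_iff₀ (by positivity) (by positivity)]
    nlinarith [mul_pos hSpos hapos, mul_pos hapos hapos]
  have heq : ((S ^ 2 - Q) + a * (2 * S)) / (2 * S) = (S ^ 2 - Q) / (2 * S) + a := by
    field_simp
  linarith [key, heq ▸ key]
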